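/- Let u be an n-player game and k ∈ ℕ. Define the kn-player game v by splitting each player i into k copies i(1),…,i(k), each with action set Aᵢ, where the payoff of copy i₀(j₀) at the profile (a_{i(j)}) is uᵢ₀ evaluated at its own action a_{i₀(j₀)} against, for every other population i ≠ i₀, the average mixed strategy (1/k)·Σⱼ a_{i(j)} (actions identified with unit vectors in ℝ^m). Then v is (1/k)-Lipschitz: changing the action of a single player changes any other player's payoff by at most 1/k (assuming u has payoffs in [0,1] and is multilinear in each opponent's mixed strategy). -/

import Mathlib

noncomputable section

/-- Multilinear extension: expected payoff of `u` under the mixed profile `x`. -/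
def expPay {n m : ℕ} (u : (Fin n → Fin m) → ℝ) (x : Fin n → Fin m → ℝ) : ℝ :=
  ∑ a : Fin n → Fin m, (∏ i, x i (a i)) * u a

/-- The point mass at action `b`. -/
def pureStrat {m : ℕ} (b : Fin m) : Fin m → ℝ := fun j => if j = b then 1 else 0

/-- `x` is a profile of mixed strategies. -/
def IsMixedProfile {n m : ℕ} (x : Fin n → Fin m → ℝ) : Prop :=
  (∀ i j, 0 ≤ x i j) ∧ ∀ i, ∑ j, x i j = 1

/-- Nash ε-equilibrium: no player gains more than `ε` by a unilateral pure deviation. -/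
def IsNashEq {n m : ℕ} (u : Fin n → (Fin n → Fin m) → ℝ)
    (x : Fin n → Fin m → ℝ) (ε : ℝ) : Prop :=
  ∀ (i : Fin n) (b : Fin m),
    expPay (u i) (Function.update x i (pureStrat b)) - ε ≤ expPay (u i) x

/-- Every probability in `x` is an integer multiple of `1/k`. -/
def IsKUniform {n m : ℕ} (k : ℕ) (x : Fin n → Fin m → ℝ) : Prop :=
  ∀ i j, ∃ c : ℕ, x i j = (c : ℝ) / k

/-- Empirical (mixed) strategy of population `i` under a pure profile `a` of the
population game: the average of the unit vectors of the actions of the `k` copies. -/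
def emp {n m k : ℕ} (a : Fin n × Fin k → Fin m) : Fin n → Fin m → ℝ :=
  fun i j => ((Finset.univ.filter (fun t : Fin k => a (i, t) = j)).card : ℝ) / k

/-- Payoff in the population game `v = v(u,k)`: copy `p = (i₀,j₀)` plays its own action in
the game `u` against the empirical strategies of the other populations. -/
def popPay {n m k : ℕ} (u : Fin n → (Fin n → Fin m) → ℝ) (p : Fin n × Fin k)
    (a : Fin n × Fin k → Fin m) : ℝ :=
  expPay (u p.1) (Function.update (emp a) p.1 (pureStrat (a p)))

lemma expPay_as_sum {n m : ℕ} (u : (Fin n → Fin m) → ℝ) (q : Fin n)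
    (x : Fin n → Fin m → ℝ) (z : Fin n → Fin m → ℝ) (hz : ∀ i, i ≠ q → z i = x i) :
    expPay u z = ∑ b : Fin m, z q b *
      (∑ g : {j : Fin n // j ≠ q} → Fin m,
        (∏ i : {j : Fin n // j ≠ q}, x i.1 (g i)) * u ((Equiv.funSplitAt q (Fin m)).symm (b, g))) := by
  rw [expPay, ← Equiv.sum_comp (Equiv.funSplitAt q (Fin m)).symm]
  rw [Fintype.sum_prod_type]
  refine Finset.sum_congr rfl fun b _ => ?_
  rw [Finset.mul_sum]
  refine Finset.sum_congr rfl fun g _ => ?_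
  rw [← mul_assoc]
  congr 1
  rw [← Finset.mul_prod_erase Finset.univ _ (Finset.mem_univ q)]
  congr 1
  · simp [Equiv.funSplitAt]
  · rw [Finset.prod_subtype (Finset.univ.erase q) (p := fun j => j ≠ q) (by simp)]
    refine Finset.prod_congr rfl fun i _ => ?_
    rw [hz i.1 i.2]
    congr 1
    simp [Equiv.funSplitAt, i.2]

lemma expPay_diff_le {n m : ℕ} (u : (Fin n → Fin m) → ℝ)
    (hu : ∀ a, u a ∈ Set.Icc (0:ℝ) 1)
    (x : Fin n → Fin m → ℝ) (q : Fin n) (y : Fin m → ℝ)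
    (hx0 : ∀ i, i ≠ q → ∀ j, 0 ≤ x i j) (hx1 : ∀ i, i ≠ q → ∑ j, x i j = 1)
    (hsum : ∑ j, y j = ∑ j, x q j) :
    |expPay u (Function.update x q y) - expPay u x| ≤ (∑ j, |y j - x q j|) / 2 := by
  set E : Fin m → ℝ := fun b => ∑ g : {j : Fin n // j ≠ q} → Fin m,
        (∏ i : {j : Fin n // j ≠ q}, x i.1 (g i)) * u ((Equiv.funSplitAt q (Fin m)).symm (b, g))
    with hE
  have hE0 : ∀ b, 0 ≤ E b := fun b =>
    Finset.sum_nonneg fun g _ =>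
      mul_nonneg (Finset.prod_nonneg fun i _ => hx0 i.1 i.2 _) (hu _).1
  have hE1 : ∀ b, E b ≤ 1 := by
    intro b
    calc E b ≤ ∑ g : {j : Fin n // j ≠ q} → Fin m,
        (∏ i : {j : Fin n // j ≠ q}, x i.1 (g i)) := by
          refine Finset.sum_le_sum fun g _ => ?_
          exact mul_le_of_le_one_right (Finset.prod_nonneg fun i _ => hx0 i.1 i.2 _) (hu _).2
      _ = ∏ i : {j : Fin n // j ≠ q}, ∑ j, x i.1 j := (Fintype.prod_sum _).symm
      _ = 1 := by
          rw [Finset.prod_eq_one]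
          exact fun i _ => hx1 i.1 i.2
  have h1 := expPay_as_sum u q x (Function.update x q y)
    (fun i hi => Function.update_of_ne hi _ _)
  have h2 := expPay_as_sum u q x x (fun _ _ => rfl)
  rw [h1, h2, Function.update_self, ← Finset.sum_sub_distrib]
  show |∑ b : Fin m, (y b * E b - x q b * E b)| ≤ _
  have key : ∀ b : Fin m, y b * E b - x q b * E b = (y b - x q b) * (E b - 1/2)
      + (y b - x q b) * (1/2) := by intro b; ring
  simp_rw [key]
  rw [Finset.sum_add_distrib, ← Finset.sum_mul, Finset.sum_sub_distrib, hsum,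
    sub_self, zero_mul, add_zero]
  calc |∑ b : Fin m, (y b - x q b) * (E b - 1/2)|
      ≤ ∑ b : Fin m, |(y b - x q b) * (E b - 1/2)| := Finset.abs_sum_le_sum_abs _ _
    _ ≤ ∑ b : Fin m, |y b - x q b| * (1/2) := by
        refine Finset.sum_le_sum fun b _ => ?_
        rw [abs_mul]
        refine mul_le_mul_of_nonneg_left ?_ (abs_nonneg _)
        rw [abs_le]
        constructor <;> nlinarith [hE0 b, hE1 b]
    _ = (∑ j, |y j - x q j|) / 2 := by rw [← Finset.sum_mul]; ring

lemma emp_sum {n m k : ℕ} (hk : 0 < k) (a : Fin n × Fin k → Fin m) (i : Fin n) :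
    ∑ j, emp a i j = 1 := by
  unfold emp
  rw [← Finset.sum_div, ← Nat.cast_sum,
    ← Finset.card_eq_sum_card_fiberwise (f := fun t : Fin k => a (i, t))
      (fun t _ => Finset.mem_univ _)]
  simp [Finset.card_univ]
  omega

lemma pureStrat_sum {m : ℕ} (b : Fin m) : ∑ j, pureStrat b j = 1 := by
  simp [pureStrat]

lemma emp_update_ne {n m k : ℕ} (a : Fin n × Fin k → Fin m) (q : Fin n × Fin k)
    (b : Fin m) (i : Fin n) (hi : i ≠ q.1) : emp (Function.update a q b) i = emp a i := by
  have h : ∀ t, Function.update a q b (i, t) = a (i, t) := fun t =>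
    Function.update_of_ne (fun h => hi (by rw [← h])) _ _
  funext j
  simp only [emp, h]

lemma emp_card_eq {n m k : ℕ} (a : Fin n × Fin k → Fin m) (i : Fin n) (j : Fin m) :
    emp a i j = (∑ t : Fin k, if a (i, t) = j then (1:ℝ) else 0) / k := by
  unfold emp
  rw [Finset.card_filter]
  push_cast
  rfl

lemma emp_tv {n m k : ℕ} (hk : 0 < k) (a : Fin n × Fin k → Fin m) (q : Fin n × Fin k)
    (b : Fin m) :
    ∑ j, |emp (Function.update a q b) q.1 j - emp a q.1 j| ≤ 2 / k := by
  have hd : ∀ j, emp (Function.update a q b) q.1 j - emp a q.1 j =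
      ((if b = j then (1:ℝ) else 0) - (if a q = j then (1:ℝ) else 0)) / k := by
    intro j
    rw [emp_card_eq, emp_card_eq, div_sub_div_same, ← Finset.sum_sub_distrib]
    congr 1
    rw [Finset.sum_eq_single q.2]
    · rw [show (q.1, q.2) = q from rfl, Function.update_self]
    · intro t _ ht
      rw [Function.update_of_ne (fun h => ht (congrArg Prod.snd h))]
      simp
    · simp
  calc ∑ j, |emp (Function.update a q b) q.1 j - emp a q.1 j|
      = ∑ j, |(if b = j then (1:ℝ) else 0) - (if a q = j then (1:ℝ) else 0)| / k := by
        simp_rw [hd, abs_div, Nat.abs_cast]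
    _ ≤ ∑ j, ((if b = j then (1:ℝ) else 0) + (if a q = j then (1:ℝ) else 0)) / k := by
        refine Finset.sum_le_sum fun j _ => ?_
        refine div_le_div_of_nonneg_right ?_ (by positivity)
        refine (abs_sub _ _).trans (add_le_add ?_ ?_) <;>
          · rw [abs_le] ; constructor <;> split <;> norm_num
    _ = 2 / k := by
        rw [← Finset.sum_div, Finset.sum_add_distrib]
        simp
        norm_num

/-- The population game `v = v(u,k)` is `1/k`-Lipschitz: changing the action of a single
player changes any other player's payoff by at most `1/k`. -/
theorem stmt_8 {n m k : ℕ} (hk : 0 < k)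
    (u : Fin n → (Fin n → Fin m) → ℝ)
    (hu : ∀ i a, u i a ∈ Set.Icc (0 : ℝ) 1) :
    ∀ p q : Fin n × Fin k, p ≠ q → ∀ (a : Fin n × Fin k → Fin m) (b : Fin m),
      |popPay u p (Function.update a q b) - popPay u p a| ≤ 1 / k := by
  intro p q hpq a b
  set a' := Function.update a q b with ha'
  have hap : a' p = a p := Function.update_of_ne hpq _ _
  by_cases hq : q.1 = p.1
  · have heq : Function.update (emp a') p.1 (pureStrat (a' p)) =
        Function.update (emp a) p.1 (pureStrat (a p)) := by
      funext i
      rcases eq_or_ne i p.1 with hi | hi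
      · subst hi; rw [Function.update_self, Function.update_self, hap]
      · rw [Function.update_of_ne hi, Function.update_of_ne hi,
          emp_update_ne a q b i (by rw [hq]; exact hi)]
    rw [popPay, popPay, heq, sub_self, abs_zero]
    positivity
  · set x := Function.update (emp a) p.1 (pureStrat (a p)) with hx
    have heq : Function.update (emp a') p.1 (pureStrat (a' p)) =
        Function.update x q.1 (emp a' q.1) := by
      funext i
      rcases eq_or_ne i q.1 with hi | hi
      · subst hi
        rw [Function.update_of_ne hq, Function.update_self]
      · rw [Function.update_of_ne hi]
        rcases eq_or_ne i p.1 with hip | hip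
        · subst hip
          rw [Function.update_self, hap, hx, Function.update_self]
        · rw [Function.update_of_ne hip, emp_update_ne a q b i hi, hx,
            Function.update_of_ne hip]
    rw [popPay, popPay, heq]
    have hx0 : ∀ i, i ≠ q.1 → ∀ j, (0:ℝ) ≤ x i j := by
      intro i _ j
      rcases eq_or_ne i p.1 with hip | hip
      · subst hip; rw [hx, Function.update_self]
        unfold pureStrat; split <;> norm_num
      · rw [hx, Function.update_of_ne hip]
        unfold emp; positivity
    have hx1 : ∀ i, i ≠ q.1 → ∑ j, x i j = 1 := by
      intro i _
      rcases eq_or_ne i p.1 with hip | hip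
      · subst hip; rw [hx, Function.update_self]; exact pureStrat_sum _
      · rw [hx, Function.update_of_ne hip]; exact emp_sum hk a i
    have hsum : ∑ j, emp a' q.1 j = ∑ j, x q.1 j := by
      rw [hx, Function.update_of_ne hq, emp_sum hk, emp_sum hk]
    have hxq : x q.1 = emp a q.1 := by rw [hx, Function.update_of_ne hq]
    calc |expPay (u p.1) (Function.update x q.1 (emp a' q.1)) - expPay (u p.1) x|
        ≤ (∑ j, |emp a' q.1 j - x q.1 j|) / 2 :=
          expPay_diff_le (u p.1) (hu p.1) x q.1 (emp a' q.1) hx0 hx1 hsum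
      _ ≤ (2 / k) / 2 := by
          refine div_le_div_of_nonneg_right ?_ (by norm_num)
          rw [hxq]
          exact emp_tv hk a q b
      _ = 1 / k := by ring
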